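/- Let B, D be orthogonal projections on ℂ^N, ψ_1 a unit eigenvector of BDB satisfying Bψ_1 = ψ_1 and BDBψ_1 = σ² ψ_1 with 0 < σ < 1 and ‖Dψ_1‖ = σ. Then the vector f' = (ψ_1 − Dψ_1)/sqrt(2(1+σ)) + sqrt((1+σ)/(2σ²)) Dψ_1 satisfies ‖f'‖₂ = 1 and ‖Df'‖₂² = (1+σ)/2. -/

import Mathlib

open Matrix

/-- The Euclidean (ℓ²) norm of a vector in ℂ^N. -/
noncomputable def vecEnorm2 {N : ℕ} (x : Fin N → ℂ) : ℝ :=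
  ‖(EuclideanSpace.equiv (Fin N) ℂ).symm x‖

lemma stmt16_aux (σ : ℝ) (hσ : 0 < σ) : (1 + σ) / (2 * σ ^ 2) * σ ^ 2 = (1 + σ) / 2 := by
  field_simp

theorem stmt16 (N : ℕ) (hN : 0 < N) (B D : Matrix (Fin N) (Fin N) ℂ)
    (hB : Bᴴ = B ∧ B * B = B) (hD : Dᴴ = D ∧ D * D = D)
    (σ : ℝ) (hσ : 0 < σ) (hσ1 : σ < 1)
    (ψ : Fin N → ℂ) (hψ : vecEnorm2 ψ = 1)
    (hband : B.mulVec ψ = ψ)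
    (heig : (B * D * B).mulVec ψ = ((σ : ℂ) ^ 2) • ψ)
    (hDψ : vecEnorm2 (D.mulVec ψ) = σ)
    (f' : Fin N → ℂ)
    (hf' : f' = ((Real.sqrt (2 * (1 + σ)) : ℂ))⁻¹ • (ψ - D.mulVec ψ) +
        ((Real.sqrt ((1 + σ) / (2 * σ ^ 2)) : ℂ)) • D.mulVec ψ) :
    vecEnorm2 f' = 1 ∧ (vecEnorm2 (D.mulVec f')) ^ 2 = (1 + σ) / 2 := by
  classical
  have henorm : ∀ x : Fin N → ℂ, vecEnorm2 x = ‖(WithLp.equiv 2 (Fin N → ℂ)).symm x‖ :=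
    fun x => rfl
  set u : EuclideanSpace ℂ (Fin N) := (WithLp.equiv 2 (Fin N → ℂ)).symm ψ with hu
  set v : EuclideanSpace ℂ (Fin N) := (WithLp.equiv 2 (Fin N → ℂ)).symm (D.mulVec ψ) with hv
  have hnu : ‖u‖ = 1 := hψ
  have hnv : ‖v‖ = σ := hDψ
  -- key inner product
  have hstar : star ψ ᵥ* B = star ψ := by
    rw [← hB.1, ← star_mulVec, hband]
  have hBDψ : B.mulVec (D.mulVec ψ) = ((σ : ℂ) ^ 2) • ψ := by
    have h : (B * D * B).mulVec ψ = B.mulVec (D.mulVec ψ) := by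
      rw [← Matrix.mulVec_mulVec, ← Matrix.mulVec_mulVec, hband]
    rw [← h, heig]
  have h2 : star ψ ⬝ᵥ ψ = 1 := by
    have h3 : (inner ℂ u u : ℂ) = star ψ ⬝ᵥ ψ := by rw [dotProduct_comm]; rfl
    have h4 : (inner ℂ u u : ℂ) = ((‖u‖ : ℂ)) ^ 2 := by
      rw [inner_self_eq_norm_sq_to_K]; norm_cast
    rw [← h3, h4, hnu]; norm_num
  have hdot : star ψ ⬝ᵥ D.mulVec ψ = (σ : ℂ) ^ 2 := by
    have h1 : star ψ ⬝ᵥ B.mulVec (D.mulVec ψ) = star ψ ⬝ᵥ D.mulVec ψ := by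
      rw [Matrix.dotProduct_mulVec, hstar]
    rw [← h1, hBDψ, dotProduct_smul, smul_eq_mul, h2, mul_one]
  have hiuv : (inner ℂ u v : ℂ) = (σ : ℂ) ^ 2 := by
    rw [hu, hv, EuclideanSpace.inner_eq_star_dotProduct, dotProduct_comm]; exact_mod_cast hdot
  have hivv : (inner ℂ v v : ℂ) = (σ : ℂ) ^ 2 := by
    have h4 : (inner ℂ v v : ℂ) = ((‖v‖ : ℂ)) ^ 2 := by
      rw [inner_self_eq_norm_sq_to_K]; norm_cast
    rw [h4, hnv]
  set a : ℝ := (Real.sqrt (2 * (1 + σ)))⁻¹ with ha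
  set b : ℝ := Real.sqrt ((1 + σ) / (2 * σ ^ 2)) with hb
  have hσ1' : (0:ℝ) < 1 + σ := by linarith
  have ha2 : a ^ 2 = (2 * (1 + σ))⁻¹ := by
    rw [ha, ← Real.sqrt_inv, Real.sq_sqrt (by positivity)]
  have hb2 : b ^ 2 = (1 + σ) / (2 * σ ^ 2) := by
    rw [hb, Real.sq_sqrt (by positivity)]
  have hb0 : 0 ≤ b := Real.sqrt_nonneg _
  have hTf : (WithLp.equiv 2 (Fin N → ℂ)).symm f' = (a : ℂ) • (u - v) + (b : ℂ) • v := by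
    rw [hf', ha, Complex.ofReal_inv]; rfl
  have hDf' : D.mulVec f' = (b : ℂ) • D.mulVec ψ := by
    rw [hf', Matrix.mulVec_add, Matrix.mulVec_smul, Matrix.mulVec_smul,
      Matrix.mulVec_sub, Matrix.mulVec_mulVec, hD.2, sub_self, smul_zero, zero_add]
  have huv : ‖u - v‖ ^ 2 = 1 - σ ^ 2 := by
    have h := norm_sub_sq (𝕜 := ℂ) u v
    rw [hnu, hnv, hiuv] at h
    have hre : ((σ : ℂ) ^ 2).re = σ ^ 2 := by norm_cast
    simp only [one_pow, RCLike.re_to_complex] at h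
    rw [hre] at h
    linarith [h]
  have hcross : (inner ℂ ((a : ℂ) • (u - v)) ((b : ℂ) • v) : ℂ) = 0 := by
    rw [inner_smul_left, inner_smul_right, inner_sub_left, hiuv, hivv, sub_self,
      mul_zero, mul_zero]
  constructor
  · have hsq : vecEnorm2 f' ^ 2 = 1 := by
      rw [henorm, hTf, norm_add_sq (𝕜 := ℂ), hcross]
      rw [norm_smul, norm_smul]
      simp only [map_zero, mul_zero, add_zero, mul_pow]
      rw [Complex.norm_real, Complex.norm_real, Real.norm_eq_abs, Real.norm_eq_abs,
        sq_abs, sq_abs, huv, ha2, hb2, hnv]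
      field_simp
      ring
    have h0 : 0 ≤ vecEnorm2 f' := henorm f' ▸ norm_nonneg _
    nlinarith [hsq, h0]
  · rw [henorm, hDf']
    have hsm : (WithLp.equiv 2 (Fin N → ℂ)).symm ((b : ℂ) • D.mulVec ψ) = (b : ℂ) • v := by
      rw [hv]; rfl
    rw [hsm, norm_smul, Complex.norm_real, Real.norm_eq_abs, abs_of_nonneg hb0, hnv,
      mul_pow, hb2]
    exact stmt16_aux σ hσ
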